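/- arXiv:1605.08161 — 3 statements merged into one kernel-verified Lean document; each statement's English description precedes it below -/
import Mathlib

section
/- Let α < 0. As α → −∞, the first Robin eigenvalue of the interval (−R,R) (with R > 0 fixed) satisfies λ₁^α((−R,R)) = −α² − 4α² e^{2Rα} + o(α² e^{2Rα}). -/
open MeasureTheory intervalIntegral Topology Filter Asymptotics

/-- The first Robin eigenvalue of the interval `(a,b)` with boundary parameter `α`,
given by the Rayleigh quotient `(∫_a^b u'² + α(u(a)² + u(b)²)) / ∫_a^b u²`. -/
noncomputable def lam1Int (α a b : ℝ) : ℝ :=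
  sInf { q : ℝ | ∃ u : ℝ → ℝ, ContDiff ℝ 1 u ∧ (∫ x in a..b, (u x) ^ 2) ≠ 0 ∧
    q = ((∫ x in a..b, (deriv u x) ^ 2) + α * ((u a) ^ 2 + (u b) ^ 2)) /
        (∫ x in a..b, (u x) ^ 2) }

lemma key_ineq (k a b : ℝ) (hab : a ≤ b) (u : ℝ → ℝ) (hu : ContDiff ℝ 1 u) :
    k * Real.sinh (k*b) / Real.cosh (k*b) * (u b)^2
      - k * Real.sinh (k*a) / Real.cosh (k*a) * (u a)^2
      ≤ ∫ x in a..b, ((deriv u x)^2 + k^2 * (u x)^2) := by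
  set g : ℝ → ℝ := fun x => k * Real.sinh (k*x) / Real.cosh (k*x) with hg
  have hgd : ∀ x, HasDerivAt g (k^2 - (g x)^2) x := by
    intro x
    have hlin : HasDerivAt (fun y : ℝ => k * y) k x := by
      simpa using (hasDerivAt_id x).const_mul k
    have hs : HasDerivAt (fun x => k * Real.sinh (k*x)) (k * (Real.cosh (k*x) * k)) x :=
      (((Real.hasDerivAt_sinh (k*x)).comp x hlin)).const_mul k
    have hc : HasDerivAt (fun x => Real.cosh (k*x)) (Real.sinh (k*x) * k) x :=
      (Real.hasDerivAt_cosh (k*x)).comp x hlin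
    have := hs.div hc (Real.cosh_pos (k*x)).ne'
    refine this.congr_deriv ?_
    symm
    have h1 : Real.cosh (k*x)^2 - Real.sinh (k*x)^2 = 1 := Real.cosh_sq_sub_sinh_sq _
    have hc0 : Real.cosh (k*x) ≠ 0 := (Real.cosh_pos (k*x)).ne'
    rw [hg]; beta_reduce
    rw [div_pow, eq_div_iff (pow_ne_zero 2 hc0), sub_mul, div_mul_cancel₀ _ (pow_ne_zero 2 hc0)]
    nlinarith [Real.cosh_pos (k*x)]
  have hu' : Continuous (deriv u) := hu.continuous_deriv le_rfl
  have huc : Continuous u := hu.continuous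
  have hgc : Continuous g := by
    exact ((continuous_const.mul (Real.continuous_sinh.comp (continuous_const.mul continuous_id)))).div
      (Real.continuous_cosh.comp (continuous_const.mul continuous_id)) fun x => (Real.cosh_pos _).ne'
  -- G = g * u²
  have hGd : ∀ x, HasDerivAt (fun x => g x * (u x)^2)
      ((k^2 - (g x)^2) * (u x)^2 + g x * (2 * u x * deriv u x)) x := by
    intro x
    have hux : HasDerivAt u (deriv u x) x := (hu.differentiable one_ne_zero x).hasDerivAt
    exact (hgd x).mul ((hux.pow 2).congr_deriv (by ring))
  have hGint : IntervalIntegrable (fun x => (k^2 - (g x)^2) * (u x)^2 + g x * (2 * u x * deriv u x))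
      volume a b := by
    apply Continuous.intervalIntegrable
    continuity
  have hFTC : (∫ x in a..b, ((k^2 - (g x)^2) * (u x)^2 + g x * (2 * u x * deriv u x)))
      = g b * (u b)^2 - g a * (u a)^2 :=
    integral_eq_sub_of_hasDerivAt (fun x _ => hGd x) hGint
  have hint1 : IntervalIntegrable (fun x => (deriv u x)^2 + k^2 * (u x)^2) volume a b := by
    apply Continuous.intervalIntegrable; continuity
  have hsub : (∫ x in a..b, (((deriv u x)^2 + k^2 * (u x)^2)
        - ((k^2 - (g x)^2) * (u x)^2 + g x * (2 * u x * deriv u x))))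
      = (∫ x in a..b, ((deriv u x)^2 + k^2 * (u x)^2)) - (g b * (u b)^2 - g a * (u a)^2) := by
    rw [intervalIntegral.integral_sub hint1 hGint, hFTC]
  have hnn : 0 ≤ ∫ x in a..b, (((deriv u x)^2 + k^2 * (u x)^2)
        - ((k^2 - (g x)^2) * (u x)^2 + g x * (2 * u x * deriv u x))) := by
    apply intervalIntegral.integral_nonneg hab
    intro x _
    have : ((deriv u x)^2 + k^2 * (u x)^2)
        - ((k^2 - (g x)^2) * (u x)^2 + g x * (2 * u x * deriv u x))
        = (deriv u x - g x * u x)^2 := by ring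
    rw [this]; positivity
  rw [hsub] at hnn
  linarith [hnn]

lemma robin_lower_pt (R α k : ℝ) (hR : 0 < R)
    (hcond : -α * Real.cosh (k*R) ≤ k * Real.sinh (k*R))
    (q : ℝ) (hq : q ∈ { q : ℝ | ∃ u : ℝ → ℝ, ContDiff ℝ 1 u ∧
      (∫ x in (-R)..R, (u x) ^ 2) ≠ 0 ∧
      q = ((∫ x in (-R)..R, (deriv u x) ^ 2) + α * ((u (-R)) ^ 2 + (u R) ^ 2)) /
        (∫ x in (-R)..R, (u x) ^ 2) }) : -k^2 ≤ q := by
  obtain ⟨u, hu, hI, rfl⟩ := hq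
  have hu' : Continuous (deriv u) := hu.continuous_deriv le_rfl
  have huc : Continuous u := hu.continuous
  set A := ∫ x in (-R)..R, (deriv u x) ^ 2 with hA
  set I := ∫ x in (-R)..R, (u x) ^ 2 with hIdef
  have hab : (-R : ℝ) ≤ R := by linarith
  have hIpos : 0 < I := by
    have h0 : (0:ℝ) ≤ I := intervalIntegral.integral_nonneg hab (fun x _ => sq_nonneg (u x))
    rcases h0.lt_or_eq with h | h
    · exact h
    · exact absurd h.symm hI
  have hkey := key_ineq k (-R) R hab u hu
  have hsplit : (∫ x in (-R)..R, ((deriv u x)^2 + k^2 * (u x)^2)) = A + k^2 * I := by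
    rw [intervalIntegral.integral_add (by apply Continuous.intervalIntegrable; continuity)
      (by apply Continuous.intervalIntegrable; continuity), intervalIntegral.integral_const_mul]
  rw [hsplit] at hkey
  have hneg : k * Real.sinh (k*(-R)) / Real.cosh (k*(-R)) = -(k * Real.sinh (k*R) / Real.cosh (k*R)) := by
    rw [mul_neg, Real.sinh_neg, Real.cosh_neg]; ring
  rw [hneg] at hkey
  -- hkey : g(R)*(u R)^2 + g(R)*(u (-R))^2 ≤ A + k^2 I
  have hgR : -α ≤ k * Real.sinh (k*R) / Real.cosh (k*R) := by
    rw [le_div_iff₀ (Real.cosh_pos _)]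
    linarith
  have hB : -α * ((u (-R))^2 + (u R)^2) ≤ k * Real.sinh (k*R) / Real.cosh (k*R) * ((u (-R))^2 + (u R)^2) := by
    apply mul_le_mul_of_nonneg_right hgR (by positivity)
  have : -α * ((u (-R))^2 + (u R)^2) ≤ A + k^2 * I := by nlinarith
  rw [le_div_iff₀ hIpos]
  nlinarith

lemma robin_upper_mem (R α k : ℝ) (hR : 0 < R)
    (hcond : k * Real.sinh (k*R) ≤ -α * Real.cosh (k*R)) :
    ∃ q ∈ { q : ℝ | ∃ u : ℝ → ℝ, ContDiff ℝ 1 u ∧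
      (∫ x in (-R)..R, (u x) ^ 2) ≠ 0 ∧
      q = ((∫ x in (-R)..R, (deriv u x) ^ 2) + α * ((u (-R)) ^ 2 + (u R) ^ 2)) /
        (∫ x in (-R)..R, (u x) ^ 2) }, q ≤ -k^2 := by
  set u : ℝ → ℝ := fun x => Real.cosh (k*x) with hu_def
  have hlin : ∀ x : ℝ, HasDerivAt (fun y : ℝ => k * y) k x := by
    intro x; simpa using (hasDerivAt_id x).const_mul k
  have hude : ∀ x, HasDerivAt u (k * Real.sinh (k*x)) x := by
    intro x
    exact ((Real.hasDerivAt_cosh (k*x)).comp x (hlin x)).congr_deriv (by ring)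
  have hu : ContDiff ℝ 1 u := Real.contDiff_cosh.comp (contDiff_const.mul contDiff_id)
  have hab : (-R : ℝ) ≤ R := by linarith
  set I := ∫ x in (-R)..R, (u x) ^ 2 with hIdef
  have hIpos : 0 < I := by
    apply intervalIntegral.intervalIntegral_pos_of_pos_on
    · apply Continuous.intervalIntegrable; exact (hu.continuous).pow 2
    · intro x _; have := Real.cosh_pos (k*x); positivity
    · linarith
  have hder : ∀ x, deriv u x = k * Real.sinh (k*x) := fun x => (hude x).deriv
  have hdercont : Continuous (deriv u) := by
    have : deriv u = fun x => k * Real.sinh (k*x) := funext hder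
    rw [this]; continuity
  set A := ∫ x in (-R)..R, (deriv u x) ^ 2 with hA
  have hF : ∀ x : ℝ, HasDerivAt (fun x => k/2 * Real.sinh (2*k*x))
      ((deriv u x)^2 + k^2 * (u x)^2) x := by
    intro x
    have h2 : HasDerivAt (fun y : ℝ => 2*k*y) (2*k) x := by
      simpa using (hasDerivAt_id x).const_mul (2*k)
    have hd := ((Real.hasDerivAt_sinh (2*k*x)).comp x h2).const_mul (k/2)
    have hc2 : Real.cosh (2*k*x) = Real.cosh (k*x)^2 + Real.sinh (k*x)^2 := by
      rw [show (2:ℝ)*k*x = 2*(k*x) by ring, Real.cosh_two_mul]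
    have heq : (deriv u x)^2 + k^2 * (u x)^2 = k/2 * (Real.cosh (2*k*x) * (2*k)) := by
      rw [hder x]
      show (k*Real.sinh (k*x))^2 + k^2*Real.cosh (k*x)^2 = k/2*(Real.cosh (2*k*x)*(2*k))
      nlinarith [hc2]
    rw [heq]
    exact hd
  have hint1 : IntervalIntegrable (fun x => (deriv u x)^2) volume (-R) R :=
    (hdercont.pow 2).intervalIntegrable _ _
  have hint2 : IntervalIntegrable (fun x => k^2 * (u x)^2) volume (-R) R :=
    (continuous_const.mul ((hu.continuous).pow 2)).intervalIntegrable _ _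
  have hFTC : A + k^2 * I = k * Real.sinh (2*k*R) := by
    have hfull := integral_eq_sub_of_hasDerivAt (f := fun x => k/2 * Real.sinh (2*k*x))
      (fun x _ => hF x) (hint1.add hint2)
    have hsplit : (∫ x in (-R)..R, ((deriv u x)^2 + k^2 * (u x)^2)) = A + k^2 * I := by
      rw [intervalIntegral.integral_add hint1 hint2, intervalIntegral.integral_const_mul]
    rw [hsplit] at hfull
    rw [hfull]
    show k/2 * Real.sinh (2*k*R) - k/2 * Real.sinh (2*k*(-R)) = _
    rw [show (2:ℝ)*k*(-R) = -(2*k*R) by ring, Real.sinh_neg]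
    ring
  refine ⟨(A + α * ((u (-R))^2 + (u R)^2)) / I, ⟨u, hu, hIpos.ne', rfl⟩, ?_⟩
  rw [div_le_iff₀ hIpos]
  have huR : u R = Real.cosh (k*R) := rfl
  have huL : u (-R) = Real.cosh (k*R) := by
    show Real.cosh (k*(-R)) = _
    rw [show k*(-R) = -(k*R) by ring, Real.cosh_neg]
  have hs2 : Real.sinh (2*k*R) = 2 * Real.sinh (k*R) * Real.cosh (k*R) := by
    rw [show (2:ℝ)*k*R = 2*(k*R) by ring, Real.sinh_two_mul]
  rw [huR, huL]
  have h1 : A + k^2*I = 2*k*Real.sinh (k*R)*Real.cosh (k*R) := by rw [hFTC, hs2]; ring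
  have h2 : k*Real.sinh (k*R)*Real.cosh (k*R) ≤ -α*Real.cosh (k*R)^2 := by
    nlinarith [mul_le_mul_of_nonneg_right hcond (Real.cosh_pos (k*R)).le]
  linarith

lemma robin_bounds (R α k₁ k₂ : ℝ) (hR : 0 < R)
    (h₁ : -α * Real.cosh (k₁*R) ≤ k₁ * Real.sinh (k₁*R))
    (h₂ : k₂ * Real.sinh (k₂*R) ≤ -α * Real.cosh (k₂*R)) :
    -k₁^2 ≤ lam1Int α (-R) R ∧ lam1Int α (-R) R ≤ -k₂^2 := by
  obtain ⟨q, hqmem, hqle⟩ := robin_upper_mem R α k₂ hR h₂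
  have hbdd : BddBelow { q : ℝ | ∃ u : ℝ → ℝ, ContDiff ℝ 1 u ∧
      (∫ x in (-R)..R, (u x) ^ 2) ≠ 0 ∧
      q = ((∫ x in (-R)..R, (deriv u x) ^ 2) + α * ((u (-R)) ^ 2 + (u R) ^ 2)) /
        (∫ x in (-R)..R, (u x) ^ 2) } :=
    ⟨-k₁^2, fun q hq => robin_lower_pt R α k₁ hR h₁ q hq⟩
  constructor
  · exact le_csInf ⟨q, hqmem⟩ (fun b hb => robin_lower_pt R α k₁ hR h₁ b hb)
  · exact le_trans (csInf_le hbdd hqmem) hqle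

set_option maxHeartbeats 2000000 in
/-- As `α → −∞`, `λ₁^α((−R,R)) = −α² − 4α² e^{2Rα} + o(α² e^{2Rα})`. -/
theorem lam1Int_deep_asymptotics (R : ℝ) (hR : 0 < R) :
    (fun α : ℝ => lam1Int α (-R) R - (-α ^ 2 - 4 * α ^ 2 * Real.exp (2 * R * α)))
      =o[atBot] (fun α : ℝ => α ^ 2 * Real.exp (2 * R * α)) := by
  have h2R : Tendsto (fun α : ℝ => 2*R*α) atBot atBot :=
    tendsto_id.const_mul_atBot (by positivity)
  have htend : Tendsto (fun α : ℝ => Real.exp (2*R*α)) atBot (𝓝 0) :=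
    Real.tendsto_exp_atBot.comp h2R
  have hneg : Tendsto (fun α : ℝ => -(2*R*α)) atBot atTop :=
    tendsto_neg_atBot_atTop.comp h2R
  have hbase := Real.tendsto_pow_mul_exp_neg_atTop_nhds_zero 1
  have hβt : Tendsto (fun α : ℝ => (-α) * Real.exp (2*R*α)) atBot (𝓝 0) := by
    have h := (hbase.comp hneg).const_mul (1/(2*R))
    rw [mul_zero] at h
    refine h.congr fun α => ?_
    show 1/(2*R) * ((-(2*R*α))^1 * Real.exp (-(-(2*R*α)))) = (-α) * Real.exp (2*R*α)
    rw [pow_one, neg_neg]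
    field_simp
  rw [Asymptotics.isLittleO_iff]
  intro c hc
  obtain ⟨δ, hδpos, hδ1, hδc⟩ : ∃ δ : ℝ, 0 < δ ∧ δ ≤ 1/9 ∧ 9*δ ≤ c := by
    refine ⟨min c 1 / 9, by positivity, ?_, ?_⟩
    · have := min_le_right c 1; linarith
    · have := min_le_left c 1; linarith
  have ev1 : ∀ᶠ α : ℝ in atBot, α ≤ -1 := eventually_le_atBot (-1)
  have ev2 : ∀ᶠ α : ℝ in atBot, Real.exp (2*R*α) < δ/4 :=
    htend.eventually_lt_const (by positivity)
  have ev3 : ∀ᶠ α : ℝ in atBot, (-α) * Real.exp (2*R*α) < δ/(8*R) :=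
    hβt.eventually_lt_const (by positivity)
  filter_upwards [ev1, ev2, ev3] with α h1 h2 h3
  rw [Real.norm_eq_abs, Real.norm_eq_abs]
  obtain ⟨t, htdef, ht0, h2, h3⟩ : ∃ t : ℝ, t = Real.exp (2*R*α) ∧ 0 < t ∧ t < δ/4 ∧
      (-α) * t < δ/(8*R) := ⟨_, rfl, Real.exp_pos _, h2, h3⟩
  rw [← htdef]
  have hβ : 1 ≤ -α := by linarith
  have hβ0 : 0 < -α := by linarith
  have hβt0 : 0 < (-α) * t := mul_pos hβ0 ht0
  obtain ⟨k₁, hk1def⟩ : ∃ k₁ : ℝ, k₁ = (-α)*(1+2*(1+δ)*t) := ⟨_, rfl⟩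
  obtain ⟨k₂, hk2def⟩ : ∃ k₂ : ℝ, k₂ = (-α)*(1+2*(1-δ)*t) := ⟨_, rfl⟩
  have hk1β : -α ≤ k₁ := by rw [hk1def]; nlinarith [hβt0, hδpos]
  have hk2β : -α ≤ k₂ := by rw [hk2def]; nlinarith [hβt0, hδ1]
  -- condition C1 : -α * cosh (k₁ R) ≤ k₁ * sinh (k₁ R)
  have hC1 : -α * Real.cosh (k₁*R) ≤ k₁ * Real.sinh (k₁*R) := by
    rw [Real.cosh_eq, Real.sinh_eq]
    obtain ⟨E, hE⟩ : ∃ E : ℝ, E = Real.exp (k₁*R) := ⟨_, rfl⟩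
    obtain ⟨F, hF⟩ : ∃ F : ℝ, F = Real.exp (-(k₁*R)) := ⟨_, rfl⟩
    rw [← hE, ← hF]
    have hEpos : 0 < E := hE ▸ Real.exp_pos _
    have hFpos : 0 < F := hF ▸ Real.exp_pos _
    have hEF : E * F = 1 := by rw [hE, hF, ← Real.exp_add]; simp
    have hF2 : F^2 ≤ t := by
      rw [hF, htdef, sq, ← Real.exp_add]
      apply Real.exp_le_exp.mpr
      have h := mul_nonneg (show (0:ℝ) ≤ k₁ + α by linarith) hR.le
      nlinarith [h]
    have hd : (1+δ)*t ≤ δ := by nlinarith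
    have hstep : (k₁ + (-α)) * F^2 ≤ k₁ - (-α) := by
      have hb1 : (k₁ + (-α)) * F^2 ≤ (k₁ + (-α)) * t :=
        mul_le_mul_of_nonneg_left hF2 (by linarith)
      have hb2 : (k₁ + (-α)) * t ≤ k₁ - (-α) := by
        rw [hk1def]; nlinarith [hβt0, hd, mul_pos hβt0 ht0]
      linarith
    have hkey : (k₁ + (-α)) * F ≤ (k₁ - (-α)) * E := by
      have h := mul_le_mul_of_nonneg_right hstep hEpos.le
      have hid : (k₁ + (-α)) * F^2 * E = (k₁ + (-α)) * F * (E * F) := by ring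
      rw [hid, hEF, mul_one] at h
      exact h
    linarith [hkey]
  -- condition C2 : k₂ * sinh (k₂ R) ≤ -α * cosh (k₂ R)
  have hC2 : k₂ * Real.sinh (k₂*R) ≤ -α * Real.cosh (k₂*R) := by
    rw [Real.cosh_eq, Real.sinh_eq]
    obtain ⟨E, hE⟩ : ∃ E : ℝ, E = Real.exp (k₂*R) := ⟨_, rfl⟩
    obtain ⟨F, hF⟩ : ∃ F : ℝ, F = Real.exp (-(k₂*R)) := ⟨_, rfl⟩
    rw [← hE, ← hF]
    have hEpos : 0 < E := hE ▸ Real.exp_pos _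
    have hFpos : 0 < F := hF ▸ Real.exp_pos _
    have hEF : E * F = 1 := by rw [hE, hF, ← Real.exp_add]; simp
    obtain ⟨s, hsdef⟩ : ∃ s : ℝ, s = 4*R*(-α)*(1-δ)*t := ⟨_, rfl⟩
    have hs0 : 0 ≤ s := by
      rw [hsdef]
      have : (0:ℝ) ≤ 4*R*(-α) := by positivity
      have h19 : (0:ℝ) ≤ 1 - δ := by linarith
      positivity
    have hsδ : s ≤ δ/2 := by
      rw [hsdef]
      have key : 4*R*((-α)*t) ≤ 4*R*(δ/(8*R)) :=
        mul_le_mul_of_nonneg_left h3.le (by linarith)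
      have : 4*R*(δ/(8*R)) = δ/2 := by field_simp; ring
      nlinarith [mul_nonneg (mul_nonneg (mul_nonneg hR.le hβ0.le) ht0.le) hδpos.le]
    have hW : t * E^2 = Real.exp s := by
      rw [htdef, hE, sq, ← Real.exp_add, ← Real.exp_add]
      congr 1
      rw [hk2def, hsdef]; ring
    have hexp : Real.exp s * (1 - s) ≤ 1 := by
      have h := Real.add_one_le_exp (-s)
      have h2 := mul_le_mul_of_nonneg_left h (Real.exp_pos s).le
      rw [← Real.exp_add] at h2
      simp only [add_neg_cancel, Real.exp_zero] at h2
      nlinarith [Real.exp_pos s]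
    have hone : (1-δ) * Real.exp s ≤ 1 := by
      have hss : Real.exp s * (1-δ) ≤ Real.exp s * (1-s) :=
        mul_le_mul_of_nonneg_left (by linarith) (Real.exp_pos s).le
      linarith [hss.trans hexp]
    have hstep : (k₂ - (-α)) * E^2 ≤ k₂ + (-α) := by
      have h1 : (k₂ - (-α)) * E^2 = 2*(-α)*(1-δ) * (t * E^2) := by
        rw [hk2def]; ring
      rw [h1, hW]
      nlinarith [Real.exp_pos s, hone, hβ0, hβt0]
    have hkey : (k₂ - (-α)) * E ≤ (k₂ + (-α)) * F := by
      have h := mul_le_mul_of_nonneg_right hstep hFpos.le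
      have hid : (k₂ - (-α)) * E^2 * F = (k₂ - (-α)) * E * (E * F) := by ring
      rw [hid, hEF, mul_one] at h
      exact h
    linarith [hkey]
  obtain ⟨hlow, hhigh⟩ := robin_bounds R α k₁ k₂ hR hC1 hC2
  have hgabs : |α^2 * t| = (-α)^2 * t := by
    rw [abs_of_nonneg (by positivity)]; ring
  rw [hgabs, abs_le]
  have hδt : (1+δ)^2*t ≤ δ/2 := by nlinarith
  have hβ2t : 0 < (-α)^2*t := by positivity
  constructor
  · have hup : -k₁^2 - (-α^2 - 4*α^2*t) = -4*(-α)^2*t*(δ + (1+δ)^2*t) := by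
      rw [hk1def]; ring
    nlinarith [hβ2t, hlow]
  · have hup : -k₂^2 - (-α^2 - 4*α^2*t) = 4*(-α)^2*t*(δ - (1-δ)^2*t) := by
      rw [hk2def]; ring
    nlinarith [hβ2t, hhigh]
end

section
/- Let α < 0 and 0 < R₁ < R₂, and let μ₁^α(A_{R₁,R₂}) denote the first eigenvalue of the Laplacian on the two-dimensional annulus A_{R₁,R₂} with Robin condition (parameter α) on the outer circle and Neumann condition on the inner circle. Then μ₁^α(A_{R₁,R₂}) ≤ λ₁^α(B_{R₂}), the first Robin eigenvalue of the disk of radius R₂. -/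
open MeasureTheory intervalIntegral

/-- First eigenvalue of the Laplacian on the two-dimensional annulus `A_{R₁,R₂}` with a
Robin condition (parameter `α`) on the outer circle and a Neumann condition on the inner
circle, via the radial Rayleigh quotient
`(∫_{R₁}^{R₂} ψ'(r)² r dr + α R₂ ψ(R₂)²) / ∫_{R₁}^{R₂} ψ(r)² r dr`. -/
noncomputable def mu1Annulus (R₁ R₂ α : ℝ) : ℝ :=
  sInf { q : ℝ | ∃ ψ : ℝ → ℝ, ContDiff ℝ 1 ψ ∧
    (∫ r in R₁..R₂, (ψ r) ^ 2 * r) ≠ 0 ∧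
    q = ((∫ r in R₁..R₂, (deriv ψ r) ^ 2 * r) + α * R₂ * (ψ R₂) ^ 2) /
        (∫ r in R₁..R₂, (ψ r) ^ 2 * r) }

/-- First Robin eigenvalue of the disk of radius `R` via the radial Rayleigh quotient. -/
noncomputable def lam1Disk (R α : ℝ) : ℝ :=
  sInf { q : ℝ | ∃ φ : ℝ → ℝ, ContDiff ℝ 1 φ ∧
    (∫ r in (0 : ℝ)..R, (φ r) ^ 2 * r) ≠ 0 ∧
    q = ((∫ r in (0 : ℝ)..R, (deriv φ r) ^ 2 * r) + α * R * (φ R) ^ 2) /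
        (∫ r in (0 : ℝ)..R, (φ r) ^ 2 * r) }

lemma key_trace (α a b : ℝ) (hα : α < 0) (ha : 0 < a) (hab : a < b)
    (ψ : ℝ → ℝ) (hψ : ContDiff ℝ 1 ψ) :
    (α*b/((b^2-a^2)/2) - (α*b)^2/a^2) * (∫ r in a..b, (ψ r)^2 * r) ≤
      (∫ r in a..b, (deriv ψ r)^2 * r) + α*b*(ψ b)^2 := by
  have hb : 0 < b := ha.trans hab
  have hc : 0 < -(α*b) := by nlinarith
  set c : ℝ := -(α*b) with hcdef
  have hK : 0 < (b^2-a^2)/2 := by nlinarith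
  set K : ℝ := (b^2-a^2)/2 with hKdef
  have hcont : Continuous ψ := hψ.continuous
  have hcont' : Continuous (deriv ψ) := hψ.continuous_deriv le_rfl
  set N : ℝ := ∫ r in a..b, (deriv ψ r)^2 * r with hN
  set D : ℝ := ∫ r in a..b, (ψ r)^2 * r with hD
  set Ip : ℝ := ∫ r in a..b, (deriv ψ r)^2 with hIp
  set Is : ℝ := ∫ r in a..b, (ψ r)^2 with hIs
  have hIp0 : 0 ≤ Ip := intervalIntegral.integral_nonneg hab.le (fun x _ => sq_nonneg _)
  have hIs0 : 0 ≤ Is := intervalIntegral.integral_nonneg hab.le (fun x _ => sq_nonneg _)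
  -- integrability facts
  have int1 : ∀ u v : ℝ, IntervalIntegrable (fun x => (deriv ψ x)^2) volume u v :=
    fun u v => (Continuous.intervalIntegrable (by fun_prop) u v)
  have int2 : ∀ u v : ℝ, IntervalIntegrable (fun x => (ψ x)^2) volume u v :=
    fun u v => (Continuous.intervalIntegrable (by fun_prop) u v)
  -- (1) a*Ip ≤ N, a*Is ≤ D
  have h1 : a * Ip ≤ N := by
    rw [hN, hIp, ← intervalIntegral.integral_const_mul]
    apply intervalIntegral.integral_mono_on hab.le
      (Continuous.intervalIntegrable (by fun_prop) a b)
      (Continuous.intervalIntegrable (by fun_prop) a b)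
    intro x hx
    have := hx.1
    nlinarith [sq_nonneg (deriv ψ x)]
  have h2 : a * Is ≤ D := by
    rw [hD, hIs, ← intervalIntegral.integral_const_mul]
    apply intervalIntegral.integral_mono_on hab.le
      (Continuous.intervalIntegrable (by fun_prop) a b)
      (Continuous.intervalIntegrable (by fun_prop) a b)
    intro x hx
    have := hx.1
    nlinarith [sq_nonneg (ψ x)]
  -- (3) trace bound pointwise in r
  have h3 : ∀ r ∈ Set.Icc a b, a*c*(ψ b)^2 ≤ a*c*(ψ r)^2 + (a^2*Ip + c^2*Is) := by
    intro r hr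
    have ftc : (ψ b)^2 - (ψ r)^2 = ∫ x in r..b, 2 * ψ x * deriv ψ x := by
      have h : ∀ x ∈ Set.uIcc r b, HasDerivAt (fun y => (ψ y)^2) (2 * ψ x * deriv ψ x) x := by
        intro x _
        have := ((hψ.differentiable one_ne_zero) x).hasDerivAt.fun_pow 2
        simpa [mul_comm, mul_assoc, mul_left_comm] using this
      exact (intervalIntegral.integral_eq_sub_of_hasDerivAt h
        (Continuous.intervalIntegrable (by fun_prop) r b)).symm
    have ftc' : a*c*(ψ b)^2 - a*c*(ψ r)^2 = ∫ x in r..b, a*c*(2 * ψ x * deriv ψ x) := by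
      rw [intervalIntegral.integral_const_mul, ← ftc]; ring
    have step1 : (∫ x in r..b, a*c*(2 * ψ x * deriv ψ x)) ≤
        ∫ x in r..b, (a^2*(deriv ψ x)^2 + c^2*(ψ x)^2) := by
      apply intervalIntegral.integral_mono_on hr.2
        (Continuous.intervalIntegrable (by fun_prop) r b)
        (Continuous.intervalIntegrable (by fun_prop) r b)
      intro x _
      nlinarith [sq_nonneg (a * deriv ψ x - c * ψ x)]
    have step2 : (∫ x in r..b, (a^2*(deriv ψ x)^2 + c^2*(ψ x)^2)) ≤
        ∫ x in a..b, (a^2*(deriv ψ x)^2 + c^2*(ψ x)^2) := by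
      have hsplit : (∫ x in a..r, (a^2*(deriv ψ x)^2 + c^2*(ψ x)^2)) +
          (∫ x in r..b, (a^2*(deriv ψ x)^2 + c^2*(ψ x)^2)) =
          ∫ x in a..b, (a^2*(deriv ψ x)^2 + c^2*(ψ x)^2) :=
        intervalIntegral.integral_add_adjacent_intervals
          (Continuous.intervalIntegrable (by fun_prop) a r)
          (Continuous.intervalIntegrable (by fun_prop) r b)
      have hpos : 0 ≤ ∫ x in a..r, (a^2*(deriv ψ x)^2 + c^2*(ψ x)^2) :=
        intervalIntegral.integral_nonneg hr.1 (fun x _ => by positivity)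
      linarith
    have step3 : (∫ x in a..b, (a^2*(deriv ψ x)^2 + c^2*(ψ x)^2)) = a^2*Ip + c^2*Is := by
      rw [hIp, hIs, ← intervalIntegral.integral_const_mul, ← intervalIntegral.integral_const_mul]
      exact intervalIntegral.integral_add (Continuous.intervalIntegrable (by fun_prop) a b)
          (Continuous.intervalIntegrable (by fun_prop) a b)
    linarith [ftc' ▸ (step1.trans (step2.trans_eq step3))]
  -- (4) integrate against weight r
  have h4 : a*c*(ψ b)^2 * K ≤ a*c*D + (a^2*Ip + c^2*Is)*K := by
    have lhs_eq : (∫ r in a..b, a*c*(ψ b)^2 * r) = a*c*(ψ b)^2 * K := by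
      rw [intervalIntegral.integral_const_mul, integral_id, hKdef]
    have rhs_eq : (∫ r in a..b, (a*c*((ψ r)^2*r) + (a^2*Ip + c^2*Is)*r)) =
        a*c*D + (a^2*Ip + c^2*Is)*K := by
      rw [intervalIntegral.integral_add
          (Continuous.intervalIntegrable (by fun_prop) a b)
          (Continuous.intervalIntegrable (by fun_prop) a b),
        intervalIntegral.integral_const_mul, intervalIntegral.integral_const_mul,
        integral_id, hD, hKdef]
    have mono : (∫ r in a..b, a*c*(ψ b)^2 * r) ≤
        ∫ r in a..b, (a*c*((ψ r)^2*r) + (a^2*Ip + c^2*Is)*r) := by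
      apply intervalIntegral.integral_mono_on hab.le
        (Continuous.intervalIntegrable (by fun_prop) a b)
        (Continuous.intervalIntegrable (by fun_prop) a b)
      intro r hr
      have hr0 : 0 ≤ r := (ha.le.trans hr.1)
      have := h3 r hr
      nlinarith
    linarith [lhs_eq ▸ (mono.trans_eq rhs_eq)]
  -- final assembly
  have hKa : (0:ℝ) < K * a^2 := by positivity
  have hrw : α*b/K - (α*b)^2/a^2 = (α*b*a^2 - (α*b)^2*K)/(K*a^2) := by
    field_simp
  rw [hrw, div_mul_eq_mul_div, div_le_iff₀ hKa]
  have hac : α*b = -c := by rw [hcdef]; ring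
  rw [hac]
  have hh4 := mul_le_mul_of_nonneg_left h4 ha.le
  have hh1 := mul_le_mul_of_nonneg_left h1 (le_of_lt (by positivity : (0:ℝ) < a^2*K))
  have hh2 := mul_le_mul_of_nonneg_left h2 (le_of_lt (by positivity : (0:ℝ) < c^2*K))
  clear_value c K N D Ip Is
  nlinarith [hh4, hh1, hh2]

lemma annulus_bddBelow (α R₁ R₂ : ℝ) (hα : α < 0) (h₁ : 0 < R₁) (h₁₂ : R₁ < R₂) :
    BddBelow { q : ℝ | ∃ ψ : ℝ → ℝ, ContDiff ℝ 1 ψ ∧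
      (∫ r in R₁..R₂, (ψ r) ^ 2 * r) ≠ 0 ∧
      q = ((∫ r in R₁..R₂, (deriv ψ r) ^ 2 * r) + α * R₂ * (ψ R₂) ^ 2) /
          (∫ r in R₁..R₂, (ψ r) ^ 2 * r) } := by
  refine ⟨α*R₂/((R₂^2-R₁^2)/2) - (α*R₂)^2/R₁^2, ?_⟩
  rintro q ⟨ψ, hψ, hD, rfl⟩
  have hD0 : 0 ≤ ∫ r in R₁..R₂, (ψ r) ^ 2 * r :=
    intervalIntegral.integral_nonneg h₁₂.le (fun x hx => mul_nonneg (sq_nonneg _) (le_trans h₁.le hx.1))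
  have hDpos : 0 < ∫ r in R₁..R₂, (ψ r) ^ 2 * r := lt_of_le_of_ne hD0 (Ne.symm hD)
  rw [le_div_iff₀ hDpos]
  exact key_trace α R₁ R₂ hα h₁ h₁₂ ψ hψ

lemma const_one_mem (α R₁ R₂ : ℝ) (h₁ : 0 ≤ R₁) (h₁₂ : R₁ < R₂) :
    (α * R₂) / ((R₂^2 - R₁^2)/2) ∈ { q : ℝ | ∃ ψ : ℝ → ℝ, ContDiff ℝ 1 ψ ∧
      (∫ r in R₁..R₂, (ψ r) ^ 2 * r) ≠ 0 ∧
      q = ((∫ r in R₁..R₂, (deriv ψ r) ^ 2 * r) + α * R₂ * (ψ R₂) ^ 2) /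
          (∫ r in R₁..R₂, (ψ r) ^ 2 * r) } := by
  have hint : (∫ r in R₁..R₂, ((fun _ : ℝ => (1:ℝ)) r) ^ 2 * r) = (R₂^2 - R₁^2)/2 := by
    simp [integral_id]
    try ring
  have hK : (0:ℝ) < (R₂^2 - R₁^2)/2 := by nlinarith
  refine ⟨fun _ => (1:ℝ), contDiff_const, by rw [hint]; exact hK.ne', ?_⟩
  have hder : (∫ r in R₁..R₂, (deriv (fun _ : ℝ => (1:ℝ)) r) ^ 2 * r) = 0 := by
    simp
  rw [hint, hder]
  norm_num

theorem mu1_annulus_le_lam1_disk (α R₁ R₂ : ℝ) (hα : α < 0) (h₁ : 0 < R₁) (h₁₂ : R₁ < R₂) :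
    mu1Annulus R₁ R₂ α ≤ lam1Disk R₂ α := by
  have hR₂ : 0 < R₂ := h₁.trans h₁₂
  have hbdd := annulus_bddBelow α R₁ R₂ hα h₁ h₁₂
  have hK : (0:ℝ) < (R₂^2 - R₁^2)/2 := by nlinarith
  -- mu1Annulus is negative
  have hmu_neg : mu1Annulus R₁ R₂ α < 0 := by
    have hle : mu1Annulus R₁ R₂ α ≤ (α * R₂) / ((R₂^2 - R₁^2)/2) :=
      csInf_le hbdd (const_one_mem α R₁ R₂ h₁.le h₁₂)
    have : (α * R₂) / ((R₂^2 - R₁^2)/2) < 0 := div_neg_of_neg_of_pos (by nlinarith) hK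
    linarith
  apply le_csInf
  · refine ⟨(α * R₂) / (R₂^2/2), fun _ => (1:ℝ), contDiff_const, ?_, ?_⟩
    · have : (∫ r in (0:ℝ)..R₂, ((1:ℝ)) ^ 2 * r) = R₂^2/2 := by
        simp [integral_id]
      rw [this]; positivity
    · have h1 : (∫ r in (0:ℝ)..R₂, ((1:ℝ)) ^ 2 * r) = R₂^2/2 := by
        simp [integral_id]
      have h2 : (∫ r in (0:ℝ)..R₂, (deriv (fun _ : ℝ => (1:ℝ)) r) ^ 2 * r) = 0 := by simp
      rw [h1, h2]
      norm_num
  · rintro q ⟨φ, hφ, hD, rfl⟩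
    have hcont : Continuous φ := hφ.continuous
    have hcont' : Continuous (deriv φ) := hφ.continuous_deriv le_rfl
    have hsplitD : (∫ r in (0:ℝ)..R₁, (φ r)^2 * r) + (∫ r in R₁..R₂, (φ r)^2 * r) =
        ∫ r in (0:ℝ)..R₂, (φ r)^2 * r :=
      intervalIntegral.integral_add_adjacent_intervals
        (Continuous.intervalIntegrable (by fun_prop) 0 R₁)
        (Continuous.intervalIntegrable (by fun_prop) R₁ R₂)
    have hsplitN : (∫ r in (0:ℝ)..R₁, (deriv φ r)^2 * r) + (∫ r in R₁..R₂, (deriv φ r)^2 * r) =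
        ∫ r in (0:ℝ)..R₂, (deriv φ r)^2 * r :=
      intervalIntegral.integral_add_adjacent_intervals
        (Continuous.intervalIntegrable (by fun_prop) 0 R₁)
        (Continuous.intervalIntegrable (by fun_prop) R₁ R₂)
    set Din := ∫ r in (0:ℝ)..R₁, (φ r)^2 * r with hDin
    set Dout := ∫ r in R₁..R₂, (φ r)^2 * r with hDout
    set Nin := ∫ r in (0:ℝ)..R₁, (deriv φ r)^2 * r with hNin
    set Nout := ∫ r in R₁..R₂, (deriv φ r)^2 * r with hNout
    have hDin0 : 0 ≤ Din := intervalIntegral.integral_nonneg h₁.le (fun x hx => mul_nonneg (sq_nonneg _) hx.1)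
    have hDout0 : 0 ≤ Dout := intervalIntegral.integral_nonneg h₁₂.le
      (fun x hx => mul_nonneg (sq_nonneg _) (le_trans h₁.le hx.1))
    have hNin0 : 0 ≤ Nin := intervalIntegral.integral_nonneg h₁.le (fun x hx => mul_nonneg (sq_nonneg _) hx.1)
    have hDtot : 0 < ∫ r in (0:ℝ)..R₂, (φ r)^2 * r := by
      refine lt_of_le_of_ne (intervalIntegral.integral_nonneg hR₂.le
        (fun x hx => mul_nonneg (sq_nonneg _) hx.1)) (Ne.symm hD)
    have hout : mu1Annulus R₁ R₂ α * Dout ≤ Nout + α * R₂ * (φ R₂)^2 := by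
      by_cases hz : Dout = 0
      · rw [hz, mul_zero]
        have := key_trace α R₁ R₂ hα h₁ h₁₂ φ hφ
        rw [← hDout, hz, mul_zero] at this
        exact this
      · have hDoutpos : 0 < Dout := lt_of_le_of_ne hDout0 (Ne.symm hz)
        have hmem : (Nout + α * R₂ * (φ R₂)^2) / Dout ∈ { q : ℝ | ∃ ψ : ℝ → ℝ,
            ContDiff ℝ 1 ψ ∧ (∫ r in R₁..R₂, (ψ r) ^ 2 * r) ≠ 0 ∧
            q = ((∫ r in R₁..R₂, (deriv ψ r) ^ 2 * r) + α * R₂ * (ψ R₂) ^ 2) /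
                (∫ r in R₁..R₂, (ψ r) ^ 2 * r) } := ⟨φ, hφ, hz, rfl⟩
        have := csInf_le hbdd hmem
        rw [le_div_iff₀ hDoutpos] at this
        exact this
    rw [← hsplitD, ← hsplitN, le_div_iff₀ (by rw [← hsplitD] at hDtot; exact hDtot)]
    have hin : mu1Annulus R₁ R₂ α * Din ≤ Nin :=
      le_trans (mul_nonpos_of_nonpos_of_nonneg hmu_neg.le hDin0) hNin0
    nlinarith [hout, hin]
end

section
/- Let α < 0, let R = R₂ − R₁ with 0 < R₁ < R₂. Then the first Robin eigenvalue of the disjoint union (−R₂,−R₁) ∪ (R₁,R₂) ⊂ ℝ is strictly smaller than the first Robin eigenvalue of the interval (−R,R): λ₁^α((R₁,R₂)) < λ₁^α((−R,R)). -/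
open MeasureTheory intervalIntegral

noncomputable def robinTh (x : ℝ) : ℝ := Real.sinh x / Real.cosh x

lemma robinTh_neg (x : ℝ) : robinTh (-x) = - robinTh x := by
  simp [robinTh, Real.sinh_neg, Real.cosh_neg, neg_div]

lemma robinTh_lt_one (x : ℝ) : robinTh x < 1 :=
  (div_lt_one (Real.cosh_pos x)).mpr (Real.sinh_lt_cosh x)

lemma robinTh_pos {x : ℝ} (hx : 0 < x) : 0 < robinTh x :=
  div_pos (by rwa [Real.sinh_pos_iff]) (Real.cosh_pos x)

lemma robinTh_strictMono : StrictMono robinTh := by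
  intro x y hxy
  rw [robinTh, robinTh, div_lt_div_iff₀ (Real.cosh_pos x) (Real.cosh_pos y)]
  have h : Real.sinh y * Real.cosh x - Real.sinh x * Real.cosh y = Real.sinh (y - x) := by
    rw [Real.sinh_sub]; ring
  nlinarith [Real.sinh_pos_iff.mpr (sub_pos.mpr hxy), h]

lemma continuous_robinTh : Continuous robinTh :=
  Real.continuous_sinh.div Real.continuous_cosh (fun x => (Real.cosh_pos x).ne')

lemma robin_exists_root {L β : ℝ} (hL : 0 < L) (hβ : 0 < β) :
    ∃ k : ℝ, 0 < k ∧ k * robinTh (k * L) = β := by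
  set g : ℝ → ℝ := fun k => k * robinTh (k * L) with hg
  have hcont : Continuous g := continuous_id.mul (continuous_robinTh.comp (continuous_id.mul continuous_const))
  have htL : 0 < robinTh L := robinTh_pos hL
  set k₀ : ℝ := max 1 (β / robinTh L + 1) with hk₀
  have hk₀1 : (1:ℝ) ≤ k₀ := le_max_left _ _
  have hk₀2 : β / robinTh L + 1 ≤ k₀ := le_max_right _ _
  have hgk₀ : β ≤ g k₀ := by
    have h1 : robinTh L ≤ robinTh (k₀ * L) := by
      apply robinTh_strictMono.monotone
      nlinarith
    have h2 : β / robinTh L < k₀ := by linarith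
    have h3 : β < k₀ * robinTh L := by
      rwa [div_lt_iff₀ htL] at h2
    have : k₀ * robinTh L ≤ k₀ * robinTh (k₀ * L) := by
      apply mul_le_mul_of_nonneg_left h1 (by linarith)
    simp only [hg]; linarith
  have h0 : (0:ℝ) ≤ k₀ := by linarith
  have := intermediate_value_Icc h0 hcont.continuousOn
  have hmem : β ∈ Set.Icc (g 0) (g k₀) := by
    constructor
    · simp [hg, hβ.le]
    · exact hgk₀
  obtain ⟨k, hkmem, hk⟩ := this hmem
  refine ⟨k, ?_, hk⟩
  rcases lt_or_eq_of_le hkmem.1 with h | h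
  · exact h
  · exfalso; rw [← h] at hk; simp [hg] at hk; linarith

section Key

variable {a b α k : ℝ}

/-- The logarithmic derivative of the eigenfunction, centered at the midpoint. -/
noncomputable def robinW (k c x : ℝ) : ℝ := k * robinTh (k * (x - c))

lemma robinW_hasDerivAt (k c x : ℝ) :
    HasDerivAt (robinW k c) (k ^ 2 - (robinW k c x) ^ 2) x := by
  have hs : HasDerivAt (fun x => Real.sinh (k * (x - c))) (Real.cosh (k * (x - c)) * k) x := by
    have := (Real.hasDerivAt_sinh (k * (x - c))).comp x
      (((hasDerivAt_id x).sub_const c).const_mul k)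
    simpa [mul_comm, Function.comp_def] using this
  have hc : HasDerivAt (fun x => Real.cosh (k * (x - c))) (Real.sinh (k * (x - c)) * k) x := by
    have := (Real.hasDerivAt_cosh (k * (x - c))).comp x
      (((hasDerivAt_id x).sub_const c).const_mul k)
    simpa [mul_comm, Function.comp_def] using this
  have hcosh := Real.cosh_pos (k * (x - c))
  have hdiv := (hs.div hc hcosh.ne')
  have := hdiv.const_mul k
  convert this using 1
  · rfl
  · rfl
  · rfl
  have h1 : Real.cosh (k*(x-c)) ^ 2 - Real.sinh (k*(x-c)) ^ 2 = 1 :=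
    Real.cosh_sq_sub_sinh_sq _
  simp only [robinW, robinTh]
  field_simp

lemma continuous_robinW (k c : ℝ) : Continuous (robinW k c) :=
  continuous_const.mul (continuous_robinTh.comp (continuous_const.mul (continuous_id.sub continuous_const)))

/-- Lower bound for all Rayleigh quotients on `(a,b)` in terms of a root `k` of the
transcendental equation. -/
lemma robin_key_lb (hab : a < b)
    (hroot : k * robinTh (k * ((b - a) / 2)) = -α) :
    ∀ q ∈ { q : ℝ | ∃ u : ℝ → ℝ, ContDiff ℝ 1 u ∧ (∫ x in a..b, (u x) ^ 2) ≠ 0 ∧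
      q = ((∫ x in a..b, (deriv u x) ^ 2) + α * ((u a) ^ 2 + (u b) ^ 2)) /
          (∫ x in a..b, (u x) ^ 2) }, -k ^ 2 ≤ q := by
  rintro q ⟨u, hu, hden, rfl⟩
  set c := (a + b) / 2 with hc
  set w := robinW k c with hw
  have hucont : Continuous u := hu.continuous
  have hu'cont : Continuous (deriv u) := (hu.iterate_deriv' 0 1).continuous
  have huderiv : ∀ x, HasDerivAt u (deriv u x) x := fun x =>
    ((hu.differentiable one_ne_zero) x).hasDerivAt
  have hwcont : Continuous w := continuous_robinW k c
  -- FTC for F x = w x * u x ^ 2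
  have hF : ∀ x ∈ Set.uIcc a b, HasDerivAt (fun x => w x * u x ^ 2)
      ((k ^ 2 - w x ^ 2) * u x ^ 2 + w x * (2 * u x * deriv u x)) x := by
    intro x _
    exact (robinW_hasDerivAt k c x).mul (((huderiv x).pow 2).congr_deriv (by ring))
  have hint : IntervalIntegrable
      (fun x => (k ^ 2 - w x ^ 2) * u x ^ 2 + w x * (2 * u x * deriv u x)) volume a b := by
    apply Continuous.intervalIntegrable
    exact ((continuous_const.sub (hwcont.pow 2)).mul (hucont.pow 2)).add
      (hwcont.mul ((continuous_const.mul hucont).mul hu'cont))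
  have hFTC := intervalIntegral.integral_eq_sub_of_hasDerivAt hF hint
  -- nonnegativity of ∫ (u' - w u)^2
  have hnn : 0 ≤ ∫ x in a..b, (deriv u x - w x * u x) ^ 2 :=
    intervalIntegral.integral_nonneg hab.le (fun x _ => sq_nonneg _)
  -- pointwise identity
  have hpt : ∀ x, (deriv u x - w x * u x) ^ 2 =
      (deriv u x) ^ 2 + k ^ 2 * u x ^ 2
        - ((k ^ 2 - w x ^ 2) * u x ^ 2 + w x * (2 * u x * deriv u x)) := by
    intro x; ring
  have hi1 : IntervalIntegrable (fun x => (deriv u x) ^ 2) volume a b :=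
    (hu'cont.pow 2).intervalIntegrable a b
  have hi2 : IntervalIntegrable (fun x => k ^ 2 * u x ^ 2) volume a b :=
    (continuous_const.mul (hucont.pow 2)).intervalIntegrable a b
  have hsplit : (∫ x in a..b, (deriv u x - w x * u x) ^ 2)
      = (∫ x in a..b, (deriv u x) ^ 2) + k ^ 2 * (∫ x in a..b, (u x) ^ 2)
        - ((fun x => w x * u x ^ 2) b - (fun x => w x * u x ^ 2) a) := by
    rw [← hFTC]
    rw [show (fun x => (deriv u x - w x * u x) ^ 2)
        = fun x => ((deriv u x) ^ 2 + k ^ 2 * u x ^ 2)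
          - ((k ^ 2 - w x ^ 2) * u x ^ 2 + w x * (2 * u x * deriv u x)) from funext fun x => hpt x]
    rw [intervalIntegral.integral_sub (hi1.add hi2) hint,
      intervalIntegral.integral_add hi1 hi2, intervalIntegral.integral_const_mul]
  -- boundary values of w
  have hwb : w b = -α := by
    have : b - c = (b - a) / 2 := by rw [hc]; ring
    rw [hw, robinW, this, hroot]
  have hwa : w a = α := by
    have h1 : a - c = -((b - a) / 2) := by rw [hc]; ring
    rw [hw, robinW, h1, mul_neg, robinTh_neg, mul_neg, hroot, neg_neg]
  have hkey : -(k ^ 2) * (∫ x in a..b, (u x) ^ 2)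
      ≤ (∫ x in a..b, (deriv u x) ^ 2) + α * ((u a) ^ 2 + (u b) ^ 2) := by
    simp only [hwb, hwa] at hsplit
    nlinarith [hnn, hsplit]
  have hdpos : 0 < ∫ x in a..b, (u x) ^ 2 := by
    rcases (intervalIntegral.integral_nonneg hab.le (fun x _ => sq_nonneg (u x))).lt_or_eq with h | h
    · exact h
    · exact absurd h.symm hden
  rw [le_div_iff₀ hdpos]
  linarith [hkey]

/-- The eigenvalue `-k²` is attained by the eigenfunction `cosh (k (x - c))`. -/
lemma robin_eigen_mem (hab : a < b)
    (hroot : k * robinTh (k * ((b - a) / 2)) = -α) :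
    -k ^ 2 ∈ { q : ℝ | ∃ u : ℝ → ℝ, ContDiff ℝ 1 u ∧ (∫ x in a..b, (u x) ^ 2) ≠ 0 ∧
      q = ((∫ x in a..b, (deriv u x) ^ 2) + α * ((u a) ^ 2 + (u b) ^ 2)) /
          (∫ x in a..b, (u x) ^ 2) } := by
  set c := (a + b) / 2 with hc
  set u : ℝ → ℝ := fun x => Real.cosh (k * (x - c)) with hu
  have hud : ∀ x, HasDerivAt u (k * Real.sinh (k * (x - c))) x := by
    intro x
    have := (Real.hasDerivAt_cosh (k * (x - c))).comp x
      (((hasDerivAt_id x).sub_const c).const_mul k)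
    simpa [hu, mul_comm, Function.comp_def] using this
  have hderiv : deriv u = fun x => k * Real.sinh (k * (x - c)) :=
    funext fun x => (hud x).deriv
  have hlin : ContDiff ℝ 1 (fun x : ℝ => k * (x - c)) :=
    contDiff_const.mul (contDiff_id.sub contDiff_const)
  have hcd : ContDiff ℝ 1 u := by
    rw [hu]; exact Real.contDiff_cosh.comp hlin
  have hdpos : 0 < ∫ x in a..b, (u x) ^ 2 := by
    apply intervalIntegral.intervalIntegral_pos_of_pos_on
    · exact ((Real.continuous_cosh.comp (continuous_const.mul
        (continuous_id.sub continuous_const))).pow 2).intervalIntegrable a b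
    · intro x _
      have := Real.cosh_pos (k * (x - c))
      positivity
    · exact hab
  -- FTC for F x = (k sinh) * cosh
  have hF : ∀ x ∈ Set.uIcc a b, HasDerivAt
      (fun x => k * Real.sinh (k * (x - c)) * Real.cosh (k * (x - c)))
      ((k * Real.sinh (k * (x - c))) ^ 2 + k ^ 2 * Real.cosh (k * (x - c)) ^ 2) x := by
    intro x _
    have hsd : HasDerivAt (fun x => Real.sinh (k * (x - c))) (k * Real.cosh (k * (x - c))) x := by
      have := (Real.hasDerivAt_sinh (k * (x - c))).comp x
        (((hasDerivAt_id x).sub_const c).const_mul k)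
      simpa [mul_comm, Function.comp_def] using this
    have := ((hsd.const_mul k).mul (hud x))
    convert this using 1
    · rfl
    · rfl
    · rfl
    simp only [hu]; ring
  have hcs : Continuous (fun x => Real.sinh (k * (x - c))) :=
    Real.continuous_sinh.comp (continuous_const.mul (continuous_id.sub continuous_const))
  have hcc : Continuous (fun x => Real.cosh (k * (x - c))) :=
    Real.continuous_cosh.comp (continuous_const.mul (continuous_id.sub continuous_const))
  have hi1 : IntervalIntegrable (fun x => (k * Real.sinh (k * (x - c))) ^ 2) volume a b :=
    ((continuous_const.mul hcs).pow 2).intervalIntegrable a b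
  have hi2 : IntervalIntegrable (fun x => k ^ 2 * Real.cosh (k * (x - c)) ^ 2) volume a b :=
    (continuous_const.mul (hcc.pow 2)).intervalIntegrable a b
  have hint : IntervalIntegrable (fun x =>
      (k * Real.sinh (k * (x - c))) ^ 2 + k ^ 2 * Real.cosh (k * (x - c)) ^ 2) volume a b :=
    hi1.add hi2
  have hFTC := intervalIntegral.integral_eq_sub_of_hasDerivAt hF hint
  rw [intervalIntegral.integral_add hi1 hi2, intervalIntegral.integral_const_mul] at hFTC
  -- boundary computations
  have hbc : b - c = (b - a) / 2 := by rw [hc]; ring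
  have hac : a - c = -((b - a) / 2) := by rw [hc]; ring
  have hcoshpos := Real.cosh_pos (k * ((b - a) / 2))
  have hsinh : k * Real.sinh (k * ((b - a) / 2)) = -α * Real.cosh (k * ((b - a) / 2)) := by
    have h := hroot
    rw [robinTh, ← mul_div_assoc] at h
    exact (div_eq_iff hcoshpos.ne').mp h
  refine ⟨u, hcd, hdpos.ne', ?_⟩
  rw [hderiv]
  have hnum : (∫ x in a..b, (k * Real.sinh (k * (x - c))) ^ 2) + α * ((u a) ^ 2 + (u b) ^ 2)
      = -k ^ 2 * ∫ x in a..b, (u x) ^ 2 := by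
    have hub : u b = Real.cosh (k * ((b - a) / 2)) := by
      show Real.cosh (k * (b - c)) = _; rw [hbc]
    have hua : u a = Real.cosh (k * ((b - a) / 2)) := by
      show Real.cosh (k * (a - c)) = _; rw [hac, mul_neg, Real.cosh_neg]
    have hFb : k * Real.sinh (k * (b - c)) * Real.cosh (k * (b - c))
        = -α * Real.cosh (k * ((b - a) / 2)) ^ 2 := by
      rw [hbc]; nlinarith [hsinh]
    have hFa : k * Real.sinh (k * (a - c)) * Real.cosh (k * (a - c))
        = α * Real.cosh (k * ((b - a) / 2)) ^ 2 := by
      rw [hac]; rw [mul_neg, Real.sinh_neg, Real.cosh_neg]; nlinarith [hsinh]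
    have h2 : (∫ x in a..b, (u x) ^ 2) = ∫ x in a..b, Real.cosh (k * (x - c)) ^ 2 := by
      rw [hu]
    rw [hub, hua, h2]
    rw [hFb, hFa] at hFTC
    linarith [hFTC]
  rw [hnum]
  field_simp

end Key

/-- For `α < 0` and `0 < R₁ < R₂`, the first Robin eigenvalue of the disjoint union
`(−R₂,−R₁) ∪ (R₁,R₂)`, which equals `λ₁^α((R₁,R₂))`, is strictly smaller than that of
the interval `(−R,R)` with `R = R₂ − R₁`. -/
theorem lam1_union_lt_interval (α R₁ R₂ : ℝ) (hα : α < 0) (h₁ : 0 < R₁) (h₁₂ : R₁ < R₂) :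
    lam1Int α R₁ R₂ < lam1Int α (-(R₂ - R₁)) (R₂ - R₁) := by
  have hβ : 0 < -α := by linarith
  have hR : 0 < R₂ - R₁ := by linarith
  have hR' : 0 < (R₂ - R₁) / 2 := by linarith
  obtain ⟨k, hk, hkeq⟩ := robin_exists_root hR hβ
  obtain ⟨k', hk', hkeq'⟩ := robin_exists_root hR' hβ
  have hroot1 : k' * robinTh (k' * ((R₂ - R₁) / 2)) = -α := hkeq'
  have hroot2 : k * robinTh (k * ((R₂ - R₁ - -(R₂ - R₁)) / 2)) = -α := by
    rw [show (R₂ - R₁ - -(R₂ - R₁)) / 2 = R₂ - R₁ by ring]; exact hkeq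
  have hab2 : -(R₂ - R₁) < R₂ - R₁ := by linarith
  have hkk : k < k' := by
    by_contra h
    push_neg at h
    have h1 : k' * ((R₂ - R₁) / 2) < k * (R₂ - R₁) := by nlinarith
    have h2 : robinTh (k' * ((R₂ - R₁) / 2)) < robinTh (k * (R₂ - R₁)) := robinTh_strictMono h1
    have h3 : 0 < robinTh (k' * ((R₂ - R₁) / 2)) := robinTh_pos (by positivity)
    nlinarith [hkeq, hkeq', mul_nonneg (sub_nonneg.mpr h)
      (le_of_lt h3), mul_pos hk (sub_pos.mpr h2)]
  have hmem1 := robin_eigen_mem h₁₂ hroot1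
  have hlb1 := robin_key_lb h₁₂ hroot1
  have hmem2 := robin_eigen_mem hab2 hroot2
  have hlb2 := robin_key_lb hab2 hroot2
  unfold lam1Int
  have hA : sInf { q : ℝ | ∃ u : ℝ → ℝ, ContDiff ℝ 1 u ∧ (∫ x in R₁..R₂, (u x) ^ 2) ≠ 0 ∧
      q = ((∫ x in R₁..R₂, (deriv u x) ^ 2) + α * ((u R₁) ^ 2 + (u R₂) ^ 2)) /
          (∫ x in R₁..R₂, (u x) ^ 2) } ≤ -k' ^ 2 :=
    csInf_le ⟨-k' ^ 2, fun q hq => hlb1 q hq⟩ hmem1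
  have hB : -k ^ 2 ≤ sInf { q : ℝ | ∃ u : ℝ → ℝ,
      ContDiff ℝ 1 u ∧ (∫ x in (-(R₂ - R₁))..(R₂ - R₁), (u x) ^ 2) ≠ 0 ∧
      q = ((∫ x in (-(R₂ - R₁))..(R₂ - R₁), (deriv u x) ^ 2)
            + α * ((u (-(R₂ - R₁))) ^ 2 + (u (R₂ - R₁)) ^ 2)) /
          (∫ x in (-(R₂ - R₁))..(R₂ - R₁), (u x) ^ 2) } :=
    le_csInf ⟨-k ^ 2, hmem2⟩ (fun q hq => hlb2 q hq)
  have hlt : -k' ^ 2 < -k ^ 2 := by nlinarith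
  calc sInf _ ≤ -k' ^ 2 := hA
    _ < -k ^ 2 := hlt
    _ ≤ sInf _ := hB
end
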